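/- For the planar system Σ' = -Σ(1 + 2A - C₂(Σ² - A²)), A' = A(1 + 2Σ + C₂(Σ² - A²)) with parameter C₂ > 0, the point (Σ,A) = (0, 1/√C₂) is an equilibrium whose Jacobian has eigenvalues -2/√C₂ - 2 and -2; in particular both eigenvalues are negative, so it is a hyperbolic sink. -/

import Mathlib

noncomputable section

/-- Extreme-tilt (v = +1) planar vector field:
`Σ' = -Σ(1 + 2A - C₂(Σ² - A²))`, `A' = A(1 + 2Σ + C₂(Σ² - A²))`. -/
def Fplus (C₂ : ℝ) : ℝ × ℝ → ℝ × ℝ := fun p =>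
  (-p.1 * (1 + 2 * p.2 - C₂ * (p.1 ^ 2 - p.2 ^ 2)),
    p.2 * (1 + 2 * p.1 + C₂ * (p.1 ^ 2 - p.2 ^ 2)))

/-- The point `(Σ, A) = (0, 1/√C₂)` is an equilibrium of the v = +1 extreme-tilt
system whose Jacobian has the eigenvalues `-2/√C₂ - 2` and `-2`; both are negative,
so it is a hyperbolic sink. -/
theorem P5_hyperbolic_sink (C₂ : ℝ) (hC : 0 < C₂) :
    Fplus C₂ (0, 1 / Real.sqrt C₂) = 0 ∧
    Module.End.HasEigenvalue
      ((fderiv ℝ (Fplus C₂) (0, 1 / Real.sqrt C₂)).toLinearMap)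
      (-2 / Real.sqrt C₂ - 2) ∧
    Module.End.HasEigenvalue
      ((fderiv ℝ (Fplus C₂) (0, 1 / Real.sqrt C₂)).toLinearMap) (-2) ∧
    -2 / Real.sqrt C₂ - 2 < 0 ∧ (-2 : ℝ) < 0 := by
  set s := Real.sqrt C₂ with hsdef
  have hs : 0 < s := Real.sqrt_pos.mpr hC
  have hs0 : s ≠ 0 := hs.ne'
  have hs2 : s ^ 2 = C₂ := Real.sq_sqrt hC.le
  -- the Jacobian as a continuous linear map
  set D : ℝ × ℝ →L[ℝ] ℝ × ℝ :=
    ((-2 / s - 2) • ContinuousLinearMap.fst ℝ ℝ ℝ).prod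
      ((2 / s) • ContinuousLinearMap.fst ℝ ℝ ℝ - (2:ℝ) • ContinuousLinearMap.snd ℝ ℝ ℝ)
    with hD
  have hDapp : ∀ v : ℝ × ℝ, D v = ((-2 / s - 2) * v.1, (2 / s) * v.1 - 2 * v.2) := by
    intro v
    simp [hD, ContinuousLinearMap.prod_apply, ContinuousLinearMap.smul_apply,
      ContinuousLinearMap.sub_apply, smul_eq_mul]
  have hF : HasFDerivAt (Fplus C₂) D ((0 : ℝ), 1 / s) := by
    have hfun : Fplus C₂ = fun p : ℝ × ℝ =>
        (-p.1 * (1 + 2 * p.2 - C₂ * (p.1 * p.1 - p.2 * p.2)),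
          p.2 * (1 + 2 * p.1 + C₂ * (p.1 * p.1 - p.2 * p.2))) := by
      funext p
      simp only [Fplus]
      rw [Prod.mk.injEq]
      constructor <;> ring
    rw [hfun]
    have hfst : HasFDerivAt (fun p : ℝ × ℝ => p.1) (ContinuousLinearMap.fst ℝ ℝ ℝ)
      ((0 : ℝ), 1 / s) := hasFDerivAt_fst
    have hsnd : HasFDerivAt (fun p : ℝ × ℝ => p.2) (ContinuousLinearMap.snd ℝ ℝ ℝ)
      ((0 : ℝ), 1 / s) := hasFDerivAt_snd
    have hq := (hfst.mul hfst).sub (hsnd.mul hsnd)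
    have h1 := (hfst.neg.mul
      (((hasFDerivAt_const (1:ℝ) ((0 : ℝ), 1 / s)).add (hsnd.const_mul 2)).sub
        (hq.const_mul C₂)))
    have h2 := (hsnd.mul
      (((hasFDerivAt_const (1:ℝ) ((0 : ℝ), 1 / s)).add (hfst.const_mul 2)).add
        (hq.const_mul C₂)))
    refine (HasFDerivAt.prodMk h1 h2).congr_fderiv ?_
    refine ContinuousLinearMap.ext fun v => ?_
    rw [hDapp]
    simp only [ContinuousLinearMap.prod_apply, ContinuousLinearMap.add_apply,
      ContinuousLinearMap.smul_apply, ContinuousLinearMap.sub_apply,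
      ContinuousLinearMap.neg_apply, ContinuousLinearMap.coe_fst',
      ContinuousLinearMap.coe_snd', ContinuousLinearMap.zero_apply,
      ContinuousLinearMap.coe_zero, Pi.zero_apply, smul_eq_mul,
      Pi.neg_apply, Pi.add_apply, Pi.sub_apply, Pi.mul_apply]
    rw [Prod.mk.injEq]
    rw [← hs2]
    constructor <;> · field_simp; ring
  have hfd : fderiv ℝ (Fplus C₂) ((0 : ℝ), 1 / s) = D := hF.fderiv
  refine ⟨?_, ?_, ?_, ?_, by norm_num⟩
  · have h0 : (0 : ℝ × ℝ) = ((0:ℝ), (0:ℝ)) := rfl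
    simp only [Fplus]
    rw [h0, Prod.mk.injEq, ← hs2]
    refine ⟨by ring, ?_⟩
    field_simp
    ring
  · apply Module.End.hasEigenvalue_of_hasEigenvector (x := ((1 : ℝ), (-1 : ℝ)))
    refine ⟨?_, by simp [Prod.ext_iff]⟩
    rw [Module.End.mem_eigenspace_iff]
    simp only [ContinuousLinearMap.coe_coe, hfd, hDapp]
    rw [Prod.smul_mk, smul_eq_mul, smul_eq_mul, Prod.mk.injEq]
    constructor <;> ring
  · apply Module.End.hasEigenvalue_of_hasEigenvector (x := ((0 : ℝ), (1 : ℝ)))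
    refine ⟨?_, by simp [Prod.ext_iff]⟩
    rw [Module.End.mem_eigenspace_iff]
    simp only [ContinuousLinearMap.coe_coe, hfd, hDapp]
    rw [Prod.smul_mk, smul_eq_mul, smul_eq_mul, Prod.mk.injEq]
    constructor <;> ring
  · have : 0 < 2 / s := by positivity
    rw [neg_div]
    linarith
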